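/- Let Q be a monotone Boolean query and let the finite instance D, partitioned into endogenous tuples D^en and exogenous tuples D^ex, be Q-separable with partition {D_1, …, D_s}, each D_i carrying the inherited partition. Then P_D(Q) = 1 − ∏_{i=1}^{s} (1 − P_{D_i}(Q)). -/

import Mathlib

open Finset

attribute [local instance] Classical.propDecidable

noncomputable section

variable {α : Type*} [DecidableEq α]

/-- The causal-effect score (= Banzhaf power index):
`CE(D,Q,τ) = 2^{-(|Dᵉⁿ|-1)} · Σ_{S ⊆ Dᵉⁿ∖{τ}} (Q[S ∪ Dᵉˣ ∪ {τ}] − Q[S ∪ Dᵉˣ])`. -/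
def ceScore (Q : Finset α → ℕ) (Den Dex : Finset α) (τ : α) : ℝ :=
  (∑ S ∈ (Den.erase τ).powerset,
      ((Q (S ∪ Dex ∪ {τ}) : ℝ) - (Q (S ∪ Dex) : ℝ))) / 2 ^ (Den.card - 1)

/-- The Shapley value of an endogenous tuple. -/
def shapleyScore (Q : Finset α → ℕ) (Den Dex : Finset α) (τ : α) : ℝ :=
  ∑ S ∈ (Den.erase τ).powerset,
    (((S.card.factorial : ℝ) * ((Den.card - S.card - 1).factorial : ℝ)) /
        (Den.card.factorial : ℝ)) *
      ((Q (S ∪ Dex ∪ {τ}) : ℝ) - (Q (S ∪ Dex) : ℝ))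

/-- Responsibility: `1/(1+m)` where `m` is the minimum cardinality of a contingency set
for `τ`, and `0` if `τ` has no contingency set. -/
def respScore (Q : Finset α → ℕ) (D Den : Finset α) (τ : α) : ℝ :=
  if ∃ Γ ⊆ Den.erase τ, Q (D \ Γ) = 1 ∧ Q (D \ insert τ Γ) = 0 then
    1 / (1 + ((sInf {n : ℕ | ∃ Γ ⊆ Den.erase τ,
        Γ.card = n ∧ Q (D \ Γ) = 1 ∧ Q (D \ insert τ Γ) = 0} : ℕ) : ℝ))
  else 0

/-- Probability of the Boolean query `Q` under the uniform-1/2 tuple-independent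
distribution on an instance with endogenous part `Een` and exogenous part `Eex`. -/
def probQ (Q : Finset α → ℕ) (Een Eex : Finset α) : ℝ :=
  ((Een.powerset.filter (fun S => Q (S ∪ Eex) = 1)).card : ℝ) / 2 ^ Een.card

/-- Two scores are aligned on the endogenous tuples. -/
def scoresAligned (sc1 sc2 : α → ℝ) (Den : Finset α) : Prop :=
  ∀ τ ∈ Den, ∀ τ' ∈ Den, (sc1 τ ≤ sc1 τ' ↔ sc2 τ ≤ sc2 τ')

/-- `W` is a minimal satisfying set for `Q`. -/
def isMSS (Q : Finset α → ℕ) (W : Finset α) : Prop :=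
  Q W = 1 ∧ ∀ τ ∈ W, Q (W.erase τ) = 0

/-- `D` is `Q`-separable with partition `D_1, …, D_s`. -/
def QSeparable (Q : Finset α → ℕ) (D : Finset α) {s : ℕ} (Dp : Fin s → Finset α) : Prop :=
  (∀ i, (Dp i).Nonempty) ∧ (∀ i j, i ≠ j → Disjoint (Dp i) (Dp j)) ∧
  (Finset.univ.biUnion Dp = D) ∧
  (∀ W : Finset α, (W ⊆ D ∧ isMSS Q W) ↔ ∃ i, W ⊆ Dp i ∧ isMSS Q W)


/-- For a monotone Boolean query `Q` and a `Q`-separable instance `D = Dᵉⁿ ∪ Dᵉˣ` with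
partition `D_1,…,D_s` (each with the inherited endogenous/exogenous partition):
`P_D(Q) = 1 − ∏_i (1 − P_{D_i}(Q))`. -/

lemma exists_mss_aux (Q : Finset α → ℕ) (hQ01 : ∀ W, Q W ≤ 1) :
    ∀ W : Finset α, Q W = 1 → ∃ W', W' ⊆ W ∧ isMSS Q W' := by
  intro W
  induction W using Finset.strongInduction with
  | _ W ih =>
    intro h
    by_cases hm : ∀ τ ∈ W, Q (W.erase τ) = 0
    · exact ⟨W, Finset.Subset.refl W, h, hm⟩
    · push_neg at hm
      obtain ⟨τ, hτ, hne⟩ := hm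
      have h1 : Q (W.erase τ) = 1 := by have := hQ01 (W.erase τ); omega
      obtain ⟨W', hsub, hmss⟩ := ih (W.erase τ) (Finset.erase_ssubset hτ) h1
      exact ⟨W', hsub.trans (Finset.erase_subset _ _), hmss⟩

theorem stmt1 (Q : Finset α → ℕ) (hQ01 : ∀ W, Q W ≤ 1)
    (hmono : ∀ ⦃W W' : Finset α⦄, W ⊆ W' → Q W ≤ Q W')
    (D Den Dex : Finset α) (hpart : Den ∪ Dex = D) (hdisj : Disjoint Den Dex)
    {s : ℕ} (Dp : Fin s → Finset α)
    (hsep : QSeparable Q D Dp) :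
    probQ Q Den Dex = 1 - ∏ i : Fin s, (1 - probQ Q (Dp i ∩ Den) (Dp i ∩ Dex)) := by
  classical
  obtain ⟨hne, hdis, hcover, hmss⟩ := hsep
  have hDenD : Den ⊆ D := hpart ▸ Finset.subset_union_left
  have hDexD : Dex ⊆ D := hpart ▸ Finset.subset_union_right
  set Dni : Fin s → Finset α := fun i => Dp i ∩ Den with hDni
  set Dxi : Fin s → Finset α := fun i => Dp i ∩ Dex with hDxi
  -- key equivalence
  have key : ∀ S ⊆ Den, (Q (S ∪ Dex) = 0 ↔ ∀ i, Q ((S ∩ Dp i) ∪ Dxi i) = 0) := by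
    intro S hS
    constructor
    · intro h0 i
      by_contra hne1
      have h1 : Q ((S ∩ Dp i) ∪ Dxi i) = 1 := by have := hQ01 ((S ∩ Dp i) ∪ Dxi i); omega
      have hsub : (S ∩ Dp i) ∪ Dxi i ⊆ S ∪ Dex :=
        Finset.union_subset_union Finset.inter_subset_left Finset.inter_subset_right
      have := hmono hsub
      omega
    · intro hall
      by_contra hne0
      have h1 : Q (S ∪ Dex) = 1 := by have := hQ01 (S ∪ Dex); omega
      obtain ⟨W', hsub, hmssW⟩ := exists_mss_aux Q hQ01 _ h1
      have hWD : W' ⊆ D := hsub.trans (Finset.union_subset (hS.trans hDenD) hDexD)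
      obtain ⟨i, hWi, -⟩ := (hmss W').1 ⟨hWD, hmssW⟩
      have hsub2 : W' ⊆ (S ∩ Dp i) ∪ Dxi i := by
        intro x hx
        have hx1 := hsub hx
        have hx2 := hWi hx
        simp only [Finset.mem_union, Finset.mem_inter, hDxi] at *
        tauto
      have h2 := hmono hsub2
      have h3 := hall i
      have h4 := hmssW.1
      omega
  have hDenUnion : Finset.univ.biUnion Dni = Den := by
    ext x
    simp only [Finset.mem_biUnion, Finset.mem_univ, true_and, hDni, Finset.mem_inter]
    constructor
    · rintro ⟨i, -, hx⟩; exact hx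
    · intro hx
      have hxD : x ∈ D := hDenD hx
      rw [← hcover] at hxD
      obtain ⟨i, -, hi⟩ := Finset.mem_biUnion.mp hxD
      exact ⟨i, hi, hx⟩
  have hdisn : ∀ i j, i ≠ j → Disjoint (Dni i) (Dni j) := fun i j hij =>
    (hdis i j hij).mono Finset.inter_subset_left Finset.inter_subset_left
  have hcardsum : Den.card = ∑ i, (Dni i).card := by
    rw [← hDenUnion, Finset.card_biUnion]
    intro i _ j _ hij
    exact hdisn i j hij
  -- restriction lemma
  have hrestrict : ∀ f : Fin s → Finset α, (∀ i, f i ⊆ Dni i) →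
      ∀ i, (Finset.univ.biUnion f) ∩ Dp i = f i := by
    intro f hf i
    ext x
    simp only [Finset.mem_inter, Finset.mem_biUnion, Finset.mem_univ, true_and]
    constructor
    · rintro ⟨⟨j, hj⟩, hxi⟩
      rcases eq_or_ne j i with rfl | hne'
      · exact hj
      · have hxj : x ∈ Dp j := (Finset.mem_inter.mp (hf j hj)).1
        exact absurd hxi (Finset.disjoint_left.mp (hdis j i hne') hxj)
    · intro hx
      exact ⟨⟨i, hx⟩, (Finset.mem_inter.mp (hf i hx)).1⟩
  -- counting: binary decomposition
  have hFG : ∀ (En Ex : Finset α),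
      (En.powerset.filter (fun S => Q (S ∪ Ex) = 1)).card
        + (En.powerset.filter (fun S => Q (S ∪ Ex) = 0)).card = 2 ^ En.card := by
    intro En Ex
    have h := Finset.card_filter_add_card_filter_not
      (s := En.powerset) (p := fun S => Q (S ∪ Ex) = 1)
    rw [Finset.card_powerset] at h
    rw [← h]
    have he : (En.powerset.filter (fun S => Q (S ∪ Ex) = 0))
        = En.powerset.filter (fun a => ¬Q (a ∪ Ex) = 1) := by
      apply Finset.filter_congr
      intro S _
      have := hQ01 (S ∪ Ex)
      constructor
      · intro h'; omega
      · intro h'; omega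
    rw [he]
  set F : Finset (Finset α) := Den.powerset.filter (fun S => Q (S ∪ Dex) = 0) with hF
  set Fi : Fin s → Finset (Finset α) :=
    fun i => (Dni i).powerset.filter (fun T => Q (T ∪ Dxi i) = 0) with hFi
  have hcardF : F.card = ∏ i, (Fi i).card := by
    rw [← Fintype.card_piFinset]
    apply Finset.card_nbij' (i := fun S i => S ∩ Dp i) (j := fun f => Finset.univ.biUnion f)
    · intro S hS
      rw [Finset.mem_coe, Fintype.mem_piFinset]
      simp only [hF, Finset.mem_coe, Finset.mem_filter, Finset.mem_powerset] at hS
      intro i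
      simp only [hFi, Finset.mem_filter, Finset.mem_powerset]
      constructor
      · intro x hx
        rw [Finset.mem_inter] at hx ⊢
        exact ⟨hx.2, hS.1 hx.1⟩
      · exact (key S hS.1).1 hS.2 i
    · intro f hf
      rw [Finset.mem_coe, Fintype.mem_piFinset] at hf
      simp only [hFi, Finset.mem_filter, Finset.mem_powerset] at hf
      have hfs : ∀ i, f i ⊆ Dni i := fun i => (hf i).1
      have hsubDen : Finset.univ.biUnion f ⊆ Den := by
        intro x hx
        obtain ⟨i, -, hi⟩ := Finset.mem_biUnion.mp hx
        exact (Finset.mem_inter.mp (hfs i hi)).2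
      simp only [hF, Finset.mem_coe, Finset.mem_filter, Finset.mem_powerset]
      refine ⟨hsubDen, ?_⟩
      rw [key _ hsubDen]
      intro i
      rw [hrestrict f hfs i]
      exact (hf i).2
    · intro S hS
      simp only [hF, Finset.mem_coe, Finset.mem_filter, Finset.mem_powerset] at hS
      ext x
      simp only [Finset.mem_biUnion, Finset.mem_univ, true_and, Finset.mem_inter]
      constructor
      · rintro ⟨i, hx, -⟩; exact hx
      · intro hx
        have hxD : x ∈ D := hDenD (hS.1 hx)
        rw [← hcover] at hxD
        obtain ⟨i, -, hi⟩ := Finset.mem_biUnion.mp hxD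
        exact ⟨i, hx, hi⟩
    · intro f hf
      rw [Finset.mem_coe, Fintype.mem_piFinset] at hf
      have hfs : ∀ i, f i ⊆ Dni i := by
        intro i
        have := hf i
        simp only [hFi, Finset.mem_filter, Finset.mem_powerset] at this
        exact this.1
      funext i
      exact hrestrict f hfs i
  -- arithmetic
  have hstep : ∀ i : Fin s, 1 - probQ Q (Dni i) (Dxi i) = ((Fi i).card : ℝ) / 2 ^ (Dni i).card := by
    intro i
    have h := hFG (Dni i) (Dxi i)
    unfold probQ
    have h2 : (0:ℝ) < 2 ^ (Dni i).card := by positivity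
    rw [eq_div_iff (ne_of_gt h2), sub_mul, one_mul, div_mul_cancel₀ _ (ne_of_gt h2)]
    have hc : (((Dni i).powerset.filter (fun S => Q (S ∪ Dxi i) = 1)).card : ℝ)
        + ((Fi i).card : ℝ) = 2 ^ (Dni i).card := by
      rw [hFi]
      exact_mod_cast congrArg (Nat.cast : ℕ → ℝ) h
    linarith
  rw [Finset.prod_congr rfl (fun i _ => hstep i), Finset.prod_div_distrib]
  have hp2 : (∏ i : Fin s, (2:ℝ) ^ (Dni i).card) = 2 ^ Den.card := by
    rw [Finset.prod_pow_eq_pow_sum, hcardsum]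
  have hpF : (∏ i : Fin s, ((Fi i).card : ℝ)) = (F.card : ℝ) := by
    rw [hcardF]; push_cast; ring
  rw [hp2, hpF]
  unfold probQ
  have h := hFG Den Dex
  have h2 : (0:ℝ) < 2 ^ Den.card := by positivity
  have hc : ((Den.powerset.filter (fun S => Q (S ∪ Dex) = 1)).card : ℝ) + (F.card : ℝ)
      = 2 ^ Den.card := by
    rw [hF]
    exact_mod_cast congrArg (Nat.cast : ℕ → ℝ) h
  field_simp
  linarith


end
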